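/- Let d ≥ 2 and let f : ℝ^d → ℂ be continuous with compact support contained in the open half-space {p ∈ ℝ^d : p⁰ + p^{d−1} > 0}. Then the Lebesgue integral of f over ℝ^d decomposes over the mass shells: ∫_{ℝ^d} f(p) dp = ∫_{−∞}^{∞} ( ∫_{ℝ^{d−2} × (0,∞)} f( ℓ⁻¹( (|p̃|² + r)/(2p⁺), p̃, p⁺ ) ) · (2p⁺)^{−1} dp̃ dp⁺ ) dr. -/

import Mathlib

open MeasureTheory

noncomputable section

/-- The point of `ℝ^{k+2}` with light-cone data `(p⁻, p̃, p⁺)`: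
`ℓ⁻¹(p⁻, p̃, p⁺) = ((p⁺ + p⁻)/√2, p¹, …, p^{d−2}, (p⁺ − p⁻)/√2)`. -/
def linv {k : ℕ} (pm : ℝ) (pt : EuclideanSpace ℝ (Fin k)) (pp : ℝ) :
    EuclideanSpace ℝ (Fin (k + 2)) :=
  WithLp.toLp 2 (Fin.cons ((pp + pm) / Real.sqrt 2)
    (Fin.snoc pt.ofLp ((pp - pm) / Real.sqrt 2)) : Fin (k + 2) → ℝ)

namespace Statement2Aux

/-! ### The 2D rotation -/

def rotL : (ℝ × ℝ) →ₗ[ℝ] (ℝ × ℝ) where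
  toFun z := ((z.1 + z.2) / Real.sqrt 2, (z.1 - z.2) / Real.sqrt 2)
  map_add' x y := by ext <;> simp <;> ring
  map_smul' c x := by ext <;> simp <;> ring

lemma rotL_det : LinearMap.det rotL = -1 := by
  rw [← LinearMap.det_toMatrix (Module.Basis.finTwoProd ℝ), Matrix.det_fin_two]
  simp [LinearMap.toMatrix_apply, rotL, Module.Basis.finTwoProd]
  have h : Real.sqrt 2 * Real.sqrt 2 = 2 := Real.mul_self_sqrt (by norm_num)
  field_simp
  nlinarith [h]

lemma rot_invol (z : ℝ × ℝ) : rotL (rotL z) = z := by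
  have h2 : Real.sqrt 2 ≠ 0 := by positivity
  have h : Real.sqrt 2 * Real.sqrt 2 = 2 := Real.mul_self_sqrt (by norm_num)
  simp only [rotL, LinearMap.coe_mk, AddHom.coe_mk]
  ext <;> field_simp <;> rw [Real.sq_sqrt (by norm_num : (0:ℝ) ≤ 2)] <;> ring

def rotE : (ℝ × ℝ) ≃ᵐ (ℝ × ℝ) where
  toFun := rotL
  invFun := rotL
  left_inv := rot_invol
  right_inv := rot_invol
  measurable_toFun := rotL.continuous_of_finiteDimensional.measurable
  measurable_invFun := rotL.continuous_of_finiteDimensional.measurable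

lemma rot_mp : MeasurePreserving rotE (volume : Measure (ℝ × ℝ)) volume := by
  refine ⟨rotE.measurable, ?_⟩
  have h := Measure.map_linearMap_addHaar_eq_smul_addHaar (volume : Measure (ℝ × ℝ))
    (f := rotL) (by rw [rotL_det]; norm_num)
  have he : ⇑rotE = ⇑rotL := rfl
  rw [he, h, rotL_det]
  norm_num

/-! ### The coordinate-splitting measurable equivalence -/

abbrev Ek (k : ℕ) := EuclideanSpace ℝ (Fin k)

def Θ (k : ℕ) : (ℝ × (ℝ × Ek k)) ≃ᵐ Ek (k+2) :=
  (MeasurableEquiv.prodCongr (MeasurableEquiv.refl ℝ)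
    ((MeasurableEquiv.prodCongr (MeasurableEquiv.refl ℝ)
        (MeasurableEquiv.toLp 2 (Fin k → ℝ)).symm).trans
      (MeasurableEquiv.piFinSuccAbove (fun _ : Fin (k+1) => ℝ) (Fin.last k)).symm)).trans
  ((MeasurableEquiv.piFinSuccAbove (fun _ : Fin (k+2) => ℝ) 0).symm.trans
    (MeasurableEquiv.toLp 2 (Fin (k+2) → ℝ)).symm.symm)

lemma prodCongr_mp {α β γ δ : Type*} [MeasureSpace α] [MeasureSpace β] [MeasureSpace γ]
    [MeasureSpace δ] [SFinite (volume : Measure α)] [SFinite (volume : Measure γ)]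
    (e : α ≃ᵐ β) (e' : γ ≃ᵐ δ)
    (he : MeasurePreserving e volume volume) (he' : MeasurePreserving e' volume volume) :
    MeasurePreserving (MeasurableEquiv.prodCongr e e') volume volume := by
  have h : ⇑(MeasurableEquiv.prodCongr e e') = Prod.map ⇑e ⇑e' := rfl
  rw [h, Measure.volume_eq_prod (α := α) (β := γ), Measure.volume_eq_prod (α := β) (β := δ)]
  exact he.prod he'

lemma Θ_mp {k : ℕ} : MeasurePreserving (Θ k) volume volume := by
  have h3 : MeasurePreserving (MeasurableEquiv.toLp 2 (Fin k → ℝ)).symm volume volume :=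
    EuclideanSpace.volume_preserving_symm_measurableEquiv_toLp (Fin k)
  have h2 : MeasurePreserving
      (MeasurableEquiv.piFinSuccAbove (fun _ : Fin (k+1) => ℝ) (Fin.last k)).symm volume volume :=
    (volume_preserving_piFinSuccAbove (fun _ : Fin (k+1) => ℝ) (Fin.last k)).symm
  have h1 : MeasurePreserving
      (MeasurableEquiv.piFinSuccAbove (fun _ : Fin (k+2) => ℝ) 0).symm volume volume :=
    (volume_preserving_piFinSuccAbove (fun _ : Fin (k+2) => ℝ) 0).symm
  have h0 : MeasurePreserving (MeasurableEquiv.toLp 2 (Fin (k+2) → ℝ)).symm.symm volume volume :=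
    (EuclideanSpace.volume_preserving_symm_measurableEquiv_toLp (Fin (k+2))).symm
  have hid : MeasurePreserving (MeasurableEquiv.refl ℝ) volume volume := MeasurePreserving.id _
  have hin : MeasurePreserving
      ((MeasurableEquiv.prodCongr (MeasurableEquiv.refl ℝ)
          (MeasurableEquiv.toLp 2 (Fin k → ℝ)).symm).trans
        (MeasurableEquiv.piFinSuccAbove (fun _ : Fin (k+1) => ℝ) (Fin.last k)).symm)
      volume volume := h2.comp (prodCongr_mp _ _ hid h3)
  exact ((h0.comp h1).comp (prodCongr_mp _ _ hid hin))

lemma Θ_apply {k : ℕ} (w : ℝ × (ℝ × Ek k)) :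
    Θ k w = (WithLp.toLp 2 (Fin.cons w.1 (Fin.snoc w.2.2.ofLp w.2.1) : Fin (k+2) → ℝ) : Ek (k+2)) := by
  simp [Θ, MeasurableEquiv.trans_apply, MeasurableEquiv.prodCongr,
    MeasurableEquiv.piFinSuccAbove_symm_apply]
  rfl

/-! ### The permutation-with-rotation equivalence -/

lemma prodAssoc_mp {α β γ : Type*} [MeasureSpace α] [MeasureSpace β] [MeasureSpace γ]
    [SFinite (volume : Measure α)] [SFinite (volume : Measure β)]
    [SFinite (volume : Measure γ)] :
    MeasurePreserving (MeasurableEquiv.prodAssoc : (α × β) × γ ≃ᵐ α × β × γ) volume volume := by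
  have h1 : (volume : Measure ((α × β) × γ))
      = ((volume : Measure α).prod volume).prod volume := by
    rw [Measure.volume_eq_prod, Measure.volume_eq_prod]
  have h2 : (volume : Measure (α × β × γ))
      = (volume : Measure α).prod ((volume : Measure β).prod volume) := by
    rw [Measure.volume_eq_prod, Measure.volume_eq_prod]
  rw [h1, h2]
  exact measurePreserving_prodAssoc _ _ _

lemma prodComm_mp {α β : Type*} [MeasureSpace α] [MeasureSpace β]
    [SFinite (volume : Measure α)] [SFinite (volume : Measure β)] :
    MeasurePreserving (MeasurableEquiv.prodComm : α × β ≃ᵐ β × α) volume volume := by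
  have h : ⇑(MeasurableEquiv.prodComm : α × β ≃ᵐ β × α) = Prod.swap := rfl
  rw [h, Measure.volume_eq_prod (α := α), Measure.volume_eq_prod (α := β)]
  exact Measure.measurePreserving_swap

def σe (k : ℕ) : ((Ek k × ℝ) × ℝ) ≃ᵐ (ℝ × (ℝ × Ek k)) :=
  (MeasurableEquiv.prodAssoc.trans
    ((MeasurableEquiv.prodCongr (MeasurableEquiv.refl (Ek k)) rotE).trans
      MeasurableEquiv.prodComm)).trans
  MeasurableEquiv.prodAssoc

lemma σe_mp {k : ℕ} : MeasurePreserving (σe k) volume volume := by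
  exact prodAssoc_mp.comp (prodComm_mp.comp
    ((prodCongr_mp _ _ (MeasurePreserving.id _) rot_mp).comp prodAssoc_mp))

lemma σe_apply {k : ℕ} (z : (Ek k × ℝ) × ℝ) :
    σe k z = ((z.1.2 + z.2) / Real.sqrt 2, ((z.1.2 - z.2) / Real.sqrt 2, z.1.1)) := rfl

lemma Θσ_apply {k : ℕ} (z : (Ek k × ℝ) × ℝ) :
    Θ k (σe k z) = linv z.2 z.1.1 z.1.2 := by
  rw [σe_apply, Θ_apply, linv]

/-! ### Coordinates of `linv` -/

lemma linv_zero {k : ℕ} (pm : ℝ) (pt : Ek k) (pp : ℝ) :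
    linv pm pt pp 0 = (pp + pm) / Real.sqrt 2 := by
  simp [linv]

lemma linv_last {k : ℕ} (pm : ℝ) (pt : Ek k) (pp : ℝ) :
    linv pm pt pp (Fin.last (k+1)) = (pp - pm) / Real.sqrt 2 := by
  have h : (Fin.last (k+1)) = (Fin.last k).succ := (Fin.succ_last k).symm
  rw [linv, h, WithLp.ofLp_toLp, Fin.cons_succ, Fin.snoc_last]

lemma linv_mid {k : ℕ} (pm : ℝ) (pt : Ek k) (pp : ℝ) (j : Fin k) :
    linv pm pt pp ((Fin.castSucc j).succ) = pt j := by
  rw [linv]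
  simp [Fin.cons_succ, Fin.snoc_castSucc]

/-! ### Vanishing for `pp ≤ 0` -/

lemma vanish {k : ℕ} {f : EuclideanSpace ℝ (Fin (k + 2)) → ℂ}
    (hsupp : tsupport f ⊆ {p | 0 < p 0 + p (Fin.last (k + 1))})
    {pp : ℝ} (hpp : pp ≤ 0) (pm : ℝ) (pt : Ek k) :
    f (linv pm pt pp) = 0 := by
  by_contra h
  have hmem : linv pm pt pp ∈ tsupport f := subset_closure (Function.mem_support.2 h)
  have hlt : 0 < linv pm pt pp 0 + linv pm pt pp (Fin.last (k+1)) := hsupp hmem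
  rw [linv_zero, linv_last, ← add_div] at hlt
  have h2 : (0:ℝ) < Real.sqrt 2 := by positivity
  have : 0 < pp + pm + (pp - pm) := by
    by_contra hc
    push_neg at hc
    have := div_nonpos_of_nonpos_of_nonneg hc h2.le
    linarith
  linarith


/-! ### 1D substitution -/

lemma sub1 {k : ℕ} (f : EuclideanSpace ℝ (Fin (k + 2)) → ℂ) (t : Ek k) {pp : ℝ}
    (hpp : 0 < pp) :
    (∫ r : ℝ, f (linv ((‖t‖ ^ 2 + r) / (2 * pp)) t pp) * (((2 * pp)⁻¹ : ℝ) : ℂ))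
      = ∫ pm : ℝ, f (linv pm t pp) := by
  have h2pp : (2 * pp) ≠ 0 := by positivity
  set K : ℝ → ℂ := fun pm => f (linv pm t pp) with hK
  have e1 : (fun r : ℝ => f (linv ((‖t‖ ^ 2 + r) / (2 * pp)) t pp) * (((2 * pp)⁻¹ : ℝ) : ℂ))
      = fun r : ℝ => K ((‖t‖ ^ 2 + r) * (2 * pp)⁻¹) * (((2 * pp)⁻¹ : ℝ) : ℂ) := by
    funext r; rw [hK]; rw [div_eq_mul_inv]
  rw [e1, integral_mul_const]
  have e2 : (∫ r : ℝ, K ((‖t‖ ^ 2 + r) * (2 * pp)⁻¹))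
      = ∫ u : ℝ, K (u * (2 * pp)⁻¹) :=
    integral_add_left_eq_self (fun u => K (u * (2 * pp)⁻¹)) (‖t‖ ^ 2)
  rw [e2, Measure.integral_comp_mul_right K (2 * pp)⁻¹, inv_inv,
    abs_of_pos (by positivity : (0:ℝ) < 2 * pp)]
  rw [Complex.real_smul]
  push_cast
  rw [mul_assoc, mul_comm (∫ pm, K pm), ← mul_assoc, mul_inv_cancel₀ (by exact_mod_cast h2pp : (2:ℂ) * (pp:ℂ) ≠ 0),
    one_mul]

/-! ### The extraction map ξ -/

def mid (k : ℕ) (p : Ek (k + 2)) : Ek k := WithLp.toLp 2 (fun j => p ((Fin.castSucc j).succ))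

lemma mid_linv {k : ℕ} (pm : ℝ) (t : Ek k) (pp : ℝ) : mid k (linv pm t pp) = t :=
  PiLp.ext fun j => linv_mid pm t pp j

lemma continuous_coord {k : ℕ} (i : Fin (k + 2)) : Continuous (fun p : Ek (k+2) => p i) :=
  (continuous_apply i).comp (PiLp.continuous_ofLp 2 (fun _ : Fin (k+2) => ℝ))

lemma continuous_mid {k : ℕ} : Continuous (mid k) :=
  (PiLp.continuous_toLp 2 (fun _ : Fin k => ℝ)).comp
    (continuous_pi fun j => continuous_coord ((Fin.castSucc j).succ))

def ξ (k : ℕ) (p : Ek (k + 2)) : ℝ × (Ek k × ℝ) :=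
  (2 * ((p 0 + p (Fin.last (k+1))) / Real.sqrt 2) * ((p 0 - p (Fin.last (k+1))) / Real.sqrt 2)
      - ‖mid k p‖ ^ 2,
    (mid k p, (p 0 + p (Fin.last (k+1))) / Real.sqrt 2))

lemma continuous_ξ {k : ℕ} : Continuous (ξ k) := by
  have h0 := continuous_coord (k := k) 0
  have hl := continuous_coord (k := k) (Fin.last (k+1))
  have hm := continuous_mid (k := k)
  exact (((continuous_const.mul ((h0.add hl).div_const _)).mul
      ((h0.sub hl).div_const _)).sub ((hm.norm).pow 2)).prodMk
    (hm.prodMk ((h0.add hl).div_const _))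

lemma ξ_linv {k : ℕ} (pm : ℝ) (t : Ek k) (pp : ℝ) :
    ξ k (linv pm t pp) = (2 * pp * pm - ‖t‖ ^ 2, (t, pp)) := by
  have h2 : Real.sqrt 2 * Real.sqrt 2 = 2 := Real.mul_self_sqrt (by norm_num)
  have h2' : Real.sqrt 2 ≠ 0 := by positivity
  rw [ξ, linv_zero, linv_last, mid_linv]
  have ha : ((pp + pm) / Real.sqrt 2 + (pp - pm) / Real.sqrt 2) / Real.sqrt 2 = pp := by
    rw [← add_div]; field_simp; rw [Real.sq_sqrt (by norm_num : (0:ℝ) ≤ 2)]; ring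
  have hb : ((pp + pm) / Real.sqrt 2 - (pp - pm) / Real.sqrt 2) / Real.sqrt 2 = pm := by
    rw [div_sub_div_same]; field_simp; rw [Real.sq_sqrt (by norm_num : (0:ℝ) ≤ 2)]; ring
  rw [ha, hb]

end Statement2Aux


open Statement2Aux in
/-- The Lebesgue integral of a continuous function compactly supported in the
half-space `{p : p⁰ + p^{d−1} > 0}` decomposes over the mass shells, each mass
shell integral written in the light-cone parameterization. -/
theorem statement2 (k : ℕ) (f : EuclideanSpace ℝ (Fin (k + 2)) → ℂ)
    (hf : Continuous f) (hcs : HasCompactSupport f)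
    (hsupp : tsupport f ⊆ {p | 0 < p 0 + p (Fin.last (k + 1))}) :
    ∫ p, f p
      = ∫ r : ℝ, ∫ x in {x : EuclideanSpace ℝ (Fin k) × ℝ | 0 < x.2},
          f (linv ((‖x.1‖ ^ 2 + r) / (2 * x.2)) x.1 x.2) * (((2 * x.2)⁻¹ : ℝ) : ℂ) := by
  classical
  have hS : MeasurableSet {x : EuclideanSpace ℝ (Fin k) × ℝ | 0 < x.2} :=
    (isOpen_lt continuous_const continuous_snd).measurableSet
  by_cases hne : (tsupport f).Nonempty
  swap
  · have hz : ∀ p, f p = 0 := fun p =>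
      image_eq_zero_of_notMem_tsupport (by simp [Set.not_nonempty_iff_eq_empty.1 hne])
    simp [hz]
  -- constants
  obtain ⟨M, hM⟩ := hf.bounded_above_of_compact_support hcs
  have hM0 : 0 ≤ M := le_trans (norm_nonneg _) (hM (linv 0 0 0))
  have hφ : Continuous (fun p : Ek (k+2) => p 0 + p (Fin.last (k+1))) :=
    (continuous_coord 0).add (continuous_coord _)
  obtain ⟨p₀, hp₀K, hp₀min'⟩ := hcs.exists_isMinOn hne hφ.continuousOn
  have hp₀min := isMinOn_iff.mp hp₀min'
  set c : ℝ := p₀ 0 + p₀ (Fin.last (k+1)) with hcdef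
  have hc : 0 < c := hsupp hp₀K
  have hsqrt2 : (0:ℝ) < Real.sqrt 2 := by positivity
  have h2s : Real.sqrt 2 * Real.sqrt 2 = 2 := Real.mul_self_sqrt (by norm_num)
  set c' : ℝ := c / Real.sqrt 2 with hc'def
  have hc' : 0 < c' := by rw [hc'def]; positivity
  set G : ℝ × (Ek k × ℝ) → ℂ := fun z =>
    f (linv ((‖z.2.1‖ ^ 2 + z.1) / (2 * z.2.2)) z.2.1 z.2.2) * (((2 * z.2.2)⁻¹ : ℝ) : ℂ)
    with hGdef
  -- pp is bounded below on the support
  have hpplb : ∀ (pm : ℝ) (t : Ek k) (pp : ℝ), f (linv pm t pp) ≠ 0 → c' ≤ pp ∧ 0 < pp := by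
    intro pm t pp hz
    have hmem : linv pm t pp ∈ tsupport f := subset_closure (Function.mem_support.2 hz)
    have h1 : c ≤ linv pm t pp 0 + linv pm t pp (Fin.last (k+1)) := hp₀min _ hmem
    rw [linv_zero, linv_last, ← add_div] at h1
    have h1' : c ≤ 2 * pp / Real.sqrt 2 := by
      rw [show pp + pm + (pp - pm) = 2 * pp by ring] at h1; exact h1
    have h2 : c' ≤ pp := by
      rw [hc'def]
      have h3 : c / Real.sqrt 2 ≤ 2 * pp / Real.sqrt 2 / Real.sqrt 2 :=
        (div_le_div_iff_of_pos_right hsqrt2).mpr h1'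
      have h4 : 2 * pp / Real.sqrt 2 / Real.sqrt 2 = pp := by
        rw [div_div, h2s]; ring
      linarith
    exact ⟨h2, lt_of_lt_of_le hc' h2⟩
  -- compact set containing the support of G
  have hK'c : IsCompact (ξ k '' tsupport f) := hcs.image continuous_ξ
  set M' : ℝ := M * (2 * c')⁻¹ with hM'def
  have hM'0 : 0 ≤ M' := by rw [hM'def]; positivity
  have hbound : ∀ z, ‖G z‖ ≤ (ξ k '' tsupport f).indicator (fun _ => M') z := by
    intro z
    by_cases hz : G z = 0
    · rw [hz, norm_zero]
      exact Set.indicator_nonneg (fun _ _ => hM'0) z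
    · obtain ⟨r, t, pp⟩ := z
      have hfz : f (linv ((‖t‖ ^ 2 + r) / (2 * pp)) t pp) ≠ 0 := by
        intro h0; apply hz; rw [hGdef]; simp only []; rw [h0, zero_mul]
      obtain ⟨hcpp, hpp⟩ := hpplb _ _ _ hfz
      have hppne : pp ≠ 0 := ne_of_gt hpp
      have hmemK : linv ((‖t‖ ^ 2 + r) / (2 * pp)) t pp ∈ tsupport f :=
        subset_closure (Function.mem_support.2 hfz)
      have hzmem : (r, (t, pp)) ∈ ξ k '' tsupport f := by
        refine ⟨_, hmemK, ?_⟩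
        rw [ξ_linv]
        have he : 2 * pp * ((‖t‖ ^ 2 + r) / (2 * pp)) - ‖t‖ ^ 2 = r := by
          field_simp
          ring
        rw [he]
      rw [Set.indicator_of_mem hzmem, hGdef]
      simp only []
      rw [norm_mul]
      have h1 : ‖(((2 * pp)⁻¹ : ℝ) : ℂ)‖ = (2 * pp)⁻¹ := by
        rw [Complex.norm_real, Real.norm_eq_abs, abs_of_pos (by positivity)]
      rw [h1, hM'def]
      refine mul_le_mul (hM _) ?_ (by positivity) hM0
      exact inv_anti₀ (by positivity) (by linarith)
  -- measurability of G
  have hGmeas : Measurable G := by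
    have hψ : Measurable (fun z : ℝ × (Ek k × ℝ) =>
        ((z.2.1, z.2.2), (‖z.2.1‖ ^ 2 + z.1) / (2 * z.2.2))) := by
      refine Measurable.prodMk (measurable_snd.fst.prodMk measurable_snd.snd) ?_
      exact ((measurable_snd.fst.norm.pow_const 2).add measurable_fst).div
        (measurable_snd.snd.const_mul 2)
    have hl : (fun z : ℝ × (Ek k × ℝ) =>
        linv ((‖z.2.1‖ ^ 2 + z.1) / (2 * z.2.2)) z.2.1 z.2.2)
        = fun z => Θ k (σe k ((z.2.1, z.2.2), (‖z.2.1‖ ^ 2 + z.1) / (2 * z.2.2))) := by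
      funext z; rw [Θσ_apply]
    rw [hGdef]
    refine Measurable.mul ?_ (Complex.measurable_ofReal.comp
      ((measurable_snd.snd.const_mul 2).inv))
    refine hf.measurable.comp ?_
    rw [hl]
    exact ((Θ k).measurable.comp (σe k).measurable).comp hψ
  -- integrability of G
  have hbnd_int : Integrable ((ξ k '' tsupport f).indicator fun _ => M')
      ((volume : Measure ℝ).prod
        ((volume : Measure (EuclideanSpace ℝ (Fin k) × ℝ)).restrict {x | 0 < x.2})) := by
    rw [integrable_indicator_iff hK'c.measurableSet]
    refine integrableOn_const (lt_top_iff_ne_top.1 ?_)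
    obtain ⟨R2, hR2⟩ := hK'c.isBounded.subset_closedBall 0
    refine lt_of_le_of_lt (measure_mono hR2) ?_
    have hball : Metric.closedBall (0 : ℝ × (Ek k × ℝ)) R2
        = Metric.closedBall (0:ℝ) R2 ×ˢ Metric.closedBall (0 : Ek k × ℝ) R2 := by
      rw [show (0 : ℝ × (Ek k × ℝ)) = ((0:ℝ), (0 : Ek k × ℝ)) from rfl,
        ← closedBall_prod_same]
    rw [hball, Measure.prod_prod]
    refine ENNReal.mul_lt_top ?_ ?_
    · exact (isCompact_closedBall _ _).measure_lt_top
    · rw [Measure.restrict_apply (measurableSet_closedBall)]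
      exact lt_of_le_of_lt (measure_mono Set.inter_subset_left)
        ((isCompact_closedBall _ _).measure_lt_top)
  have hGint : Integrable G ((volume : Measure ℝ).prod
      ((volume : Measure (EuclideanSpace ℝ (Fin k) × ℝ)).restrict {x | 0 < x.2})) :=
    Integrable.mono' hbnd_int hGmeas.aestronglyMeasurable (Filter.Eventually.of_forall hbound)
  -- main chain
  have hfi : Integrable f := hf.integrable_of_hasCompactSupport hcs
  have hEmp : MeasurePreserving ((σe k).trans (Θ k)) volume volume := Θ_mp.comp σe_mp
  have hEapp : ∀ z : (Ek k × ℝ) × ℝ, ((σe k).trans (Θ k)) z = linv z.2 z.1.1 z.1.2 :=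
    fun z => Θσ_apply z
  have hgi : Integrable (fun z : (Ek k × ℝ) × ℝ => f (linv z.2 z.1.1 z.1.2)) volume := by
    have h := (hEmp.integrable_comp_emb ((σe k).trans (Θ k)).measurableEmbedding (g := f)).2 hfi
    refine h.congr (Filter.Eventually.of_forall fun z => ?_)
    rw [Function.comp_apply, hEapp]
  have h1 : ∫ p, f p = ∫ z : (Ek k × ℝ) × ℝ, f (linv z.2 z.1.1 z.1.2) := by
    rw [← hEmp.integral_comp ((σe k).trans (Θ k)).measurableEmbedding f]
    refine integral_congr_ae (Filter.Eventually.of_forall fun z => ?_)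
    show f (((σe k).trans (Θ k)) z) = f (linv z.2 z.1.1 z.1.2)
    rw [hEapp]
  have h2 : ∫ z : (Ek k × ℝ) × ℝ, f (linv z.2 z.1.1 z.1.2)
      = ∫ x : Ek k × ℝ, ∫ pm : ℝ, f (linv pm x.1 x.2) := by
    rw [Measure.volume_eq_prod,
      integral_prod _ (by rw [← Measure.volume_eq_prod]; exact hgi)]
  have h3 : ∫ x : Ek k × ℝ, ∫ pm : ℝ, f (linv pm x.1 x.2)
      = ∫ x in {x : EuclideanSpace ℝ (Fin k) × ℝ | 0 < x.2}, ∫ pm : ℝ, f (linv pm x.1 x.2) := by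
    refine (setIntegral_eq_integral_of_forall_compl_eq_zero fun x hx => ?_).symm
    have hx2 : x.2 ≤ 0 := le_of_not_gt hx
    have hv : ∀ pm : ℝ, f (linv pm x.1 x.2) = 0 := fun pm => vanish hsupp hx2 pm x.1
    simp [hv]
  have h4 : ∫ x in {x : EuclideanSpace ℝ (Fin k) × ℝ | 0 < x.2}, ∫ pm : ℝ, f (linv pm x.1 x.2)
      = ∫ x in {x : EuclideanSpace ℝ (Fin k) × ℝ | 0 < x.2}, ∫ r : ℝ, G (r, x) := by
    refine setIntegral_congr_fun hS fun x hx => ?_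
    rw [hGdef]
    exact (sub1 f x.1 hx).symm
  have h5 : (∫ r : ℝ, ∫ x in {x : EuclideanSpace ℝ (Fin k) × ℝ | 0 < x.2}, G (r, x))
      = ∫ x in {x : EuclideanSpace ℝ (Fin k) × ℝ | 0 < x.2}, ∫ r : ℝ, G (r, x) := by
    refine integral_integral_swap (f := fun r x => G (r, x)) ?_
    have he : (Function.uncurry fun (r : ℝ) (x : Ek k × ℝ) => G (r, x)) = G := by
      funext z; rw [Function.uncurry]
    rw [he]
    exact hGint
  rw [h1, h2, h3, h4, ← h5]
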